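/- For all P, Q ∈ Γ_n, the relative Jensen-Shannon divergence satisfies 0 ≤ F(P||Q) ≤ (4/27)·J(P||Q), where F(P||Q) = ∑p_i ln(2p_i/(p_i+q_i)) and J(P||Q) = ∑(p_i - q_i)ln(p_i/q_i). -/

import Mathlib

open Finset Real

noncomputable def hF (x : ℝ) : ℝ :=
  x*(Real.log 2 + Real.log x - Real.log (x+1)) - (x-1)/2 - 4/27*((x-1)*Real.log x)

noncomputable def hF' (x : ℝ) : ℝ :=
  (Real.log 2 + Real.log x - Real.log (x+1)) + 1/(x+1) - 1/2 - 4/27*(Real.log x + 1 - 1/x)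

lemma hasDerivAt_hF {x : ℝ} (hx : 0 < x) : HasDerivAt hF (hF' x) x := by
  have hx1 : (0:ℝ) < x + 1 := by linarith
  have h1 : HasDerivAt (fun x : ℝ => Real.log x) (1/x) x := by
    simpa [one_div] using Real.hasDerivAt_log hx.ne'
  have h2 : HasDerivAt (fun x : ℝ => Real.log (x+1)) (1/(x+1)) x := by
    have := (Real.hasDerivAt_log hx1.ne').comp x ((hasDerivAt_id x).add_const 1)
    simpa [one_div, Function.comp_def] using this
  have h3 : HasDerivAt (fun x : ℝ => Real.log 2 + Real.log x - Real.log (x+1))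
      (1/x - 1/(x+1)) x := by
    simpa [Pi.sub_def] using ((h1.const_add (Real.log 2)).sub h2)
  have h4 : HasDerivAt (fun x : ℝ => x*(Real.log 2 + Real.log x - Real.log (x+1)))
      (1*(Real.log 2 + Real.log x - Real.log (x+1)) + x*(1/x - 1/(x+1))) x :=
    (hasDerivAt_id x).mul h3
  have h5 : HasDerivAt (fun x : ℝ => (x-1)*Real.log x)
      (1*Real.log x + (x-1)*(1/x)) x :=
    ((hasDerivAt_id x).sub_const 1).mul h1
  have h6 := (h4.sub (((hasDerivAt_id x).sub_const 1).div_const 2)).sub (h5.const_mul (4/27:ℝ))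
  refine h6.congr_deriv ?_
  unfold hF'
  field_simp
  ring

lemma hasDerivAt_hF' {x : ℝ} (hx : 0 < x) :
    HasDerivAt hF' (1/x - 1/(x+1) - 1/(x+1)^2 - 4/27*(1/x + 1/x^2)) x := by
  have hx1 : (0:ℝ) < x + 1 := by linarith
  have h1 : HasDerivAt (fun x : ℝ => Real.log x) (1/x) x := by
    simpa [one_div] using Real.hasDerivAt_log hx.ne'
  have h2 : HasDerivAt (fun x : ℝ => Real.log (x+1)) (1/(x+1)) x := by
    have := (Real.hasDerivAt_log hx1.ne').comp x ((hasDerivAt_id x).add_const 1)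
    simpa [one_div, Function.comp_def] using this
  have h3 : HasDerivAt (fun x : ℝ => 1/(x+1)) (-1/(x+1)^2) x := by
    have := ((hasDerivAt_id x).add_const 1).inv hx1.ne'
    simpa [one_div, Pi.inv_def] using this
  have h4 : HasDerivAt (fun x : ℝ => 1/x) (-1/x^2) x := by
    have := (hasDerivAt_id x).inv hx.ne'
    simpa [one_div, Pi.inv_def] using this
  have h6 := ((((h1.const_add (Real.log 2)).sub h2).add h3).sub_const (1/2)).sub
      (((h1.add_const 1).sub h4).const_mul (4/27:ℝ))
  refine h6.congr_deriv ?_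
  ring

lemma hF_nonpos {x : ℝ} (hx : 0 < x) : hF x ≤ 0 := by
  have hderiv' : ∀ y ∈ Set.Ioi (0:ℝ), deriv hF' y ≤ 0 := by
    intro y hy
    have hy0 : (0:ℝ) < y := hy
    rw [(hasDerivAt_hF' hy0).deriv]
    have h1 : (0:ℝ) < y + 1 := by linarith
    have key : 1/y - 1/(y+1) - 1/(y+1)^2 - 4/27*(1/y + 1/y^2)
        = (27*y - 4*(y+1)^3) / (27 * y^2 * (y+1)^2) := by
      field_simp
      ring
    rw [key]
    apply div_nonpos_of_nonpos_of_nonneg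
    · nlinarith [sq_nonneg (2*y-1), hy0.le]
    · positivity
  have hdiff' : ∀ y ∈ Set.Ioi (0:ℝ), DifferentiableAt ℝ hF' y :=
    fun y hy => (hasDerivAt_hF' hy).differentiableAt
  have hanti : AntitoneOn hF' (Set.Ioi 0) := by
    apply antitoneOn_of_deriv_nonpos (convex_Ioi 0)
    · exact fun y hy => (hdiff' y hy).continuousAt.continuousWithinAt
    · intro y hy
      exact (hdiff' y (by simpa using hy)).differentiableWithinAt
    · intro y hy
      exact hderiv' y (by simpa using hy)
  have hF'1 : hF' 1 = 0 := by
    unfold hF'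
    norm_num
  have hdiff : ∀ y ∈ Set.Ioi (0:ℝ), DifferentiableAt ℝ hF y :=
    fun y hy => (hasDerivAt_hF hy).differentiableAt
  have hcont : ContinuousOn hF (Set.Ioi 0) :=
    fun y hy => (hdiff y hy).continuousAt.continuousWithinAt
  have hF1 : hF 1 = 0 := by
    unfold hF
    norm_num
  rcases le_or_gt x 1 with hx1 | hx1
  · have hmono : MonotoneOn hF (Set.Ioc 0 1) := by
      apply monotoneOn_of_deriv_nonneg (convex_Ioc 0 1)
      · exact hcont.mono (fun y hy => hy.1)
      · intro y hy
        rw [interior_Ioc] at hy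
        exact (hdiff y hy.1).differentiableWithinAt
      · intro y hy
        rw [interior_Ioc] at hy
        rw [(hasDerivAt_hF hy.1).deriv]
        have := hanti (Set.mem_Ioi.mpr hy.1) (Set.mem_Ioi.mpr one_pos) hy.2.le
        rw [hF'1] at this
        exact this
    have := hmono (Set.mem_Ioc.mpr ⟨hx, hx1⟩) (Set.mem_Ioc.mpr ⟨one_pos, le_refl 1⟩) hx1
    rwa [hF1] at this
  · have hmono : AntitoneOn hF (Set.Ici 1) := by
      apply antitoneOn_of_deriv_nonpos (convex_Ici 1)
      · exact hcont.mono (fun y hy => Set.mem_Ioi.mpr (lt_of_lt_of_le one_pos hy))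
      · intro y hy
        rw [interior_Ici] at hy
        exact (hdiff y (Set.mem_Ioi.mpr (lt_trans one_pos hy))).differentiableWithinAt
      · intro y hy
        rw [interior_Ici] at hy
        rw [(hasDerivAt_hF (lt_trans one_pos hy)).deriv]
        have := hanti (Set.mem_Ioi.mpr one_pos) (Set.mem_Ioi.mpr (lt_trans one_pos hy)) hy.le
        rw [hF'1] at this
        exact this
    have := hmono (Set.mem_Ici.mpr le_rfl) (Set.mem_Ici.mpr hx1.le) hx1.le
    rwa [hF1] at this

lemma key_upper {a b : ℝ} (ha : 0 < a) (hb : 0 < b) :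
    a * Real.log (2*a/(a+b)) ≤ (a-b)/2 + 4/27*((a-b)*(Real.log a - Real.log b)) := by
  have hab : (0:ℝ) < a + b := by linarith
  have h := hF_nonpos (x := a/b) (by positivity)
  unfold hF at h
  have e1 : Real.log (a/b) = Real.log a - Real.log b := Real.log_div ha.ne' hb.ne'
  have e2 : Real.log (a/b + 1) = Real.log (a+b) - Real.log b := by
    rw [show a/b + 1 = (a+b)/b by field_simp]
    exact Real.log_div hab.ne' hb.ne'
  rw [e1, e2] at h
  have h2 := mul_le_mul_of_nonneg_left h hb.le
  rw [mul_zero] at h2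
  have e3 : Real.log (2*a/(a+b)) = Real.log 2 + Real.log a - Real.log (a+b) := by
    rw [Real.log_div (by positivity) hab.ne', Real.log_mul two_ne_zero ha.ne']
  rw [e3]
  have hid : b * (a/b*(Real.log 2 + (Real.log a - Real.log b) - (Real.log (a+b) - Real.log b)) - (a/b-1)/2 - 4/27*((a/b-1)*(Real.log a - Real.log b)))
      = a*(Real.log 2 + Real.log a - Real.log (a+b)) - (a-b)/2 - 4/27*((a-b)*(Real.log a - Real.log b)) := by
    field_simp
    ring
  rw [hid] at h2
  linarith

lemma key_lower {a b : ℝ} (ha : 0 < a) (hb : 0 < b) :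
    (a-b)/2 ≤ a * Real.log (2*a/(a+b)) := by
  have hab : (0:ℝ) < a + b := by linarith
  have h := Real.log_le_sub_one_of_pos (show (0:ℝ) < (a+b)/(2*a) by positivity)
  rw [show (2*a/(a+b)) = ((a+b)/(2*a))⁻¹ by rw [inv_div], Real.log_inv]
  have h2 : (a+b)/(2*a) - 1 = (b - a)/(2*a) := by field_simp; ring
  rw [h2] at h
  have h3 := mul_le_mul_of_nonneg_left h ha.le
  have h4 : a * ((b-a)/(2*a)) = (b-a)/2 := by field_simp
  rw [h4] at h3
  linarith

theorem stmt11 (n : ℕ) (p q : Fin n → ℝ)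
    (hp : ∀ i, 0 < p i) (hq : ∀ i, 0 < q i)
    (hp1 : ∑ i, p i = 1) (hq1 : ∑ i, q i = 1) :
    0 ≤ ∑ i, p i * Real.log (2 * p i / (p i + q i)) ∧ (∑ i, p i * Real.log (2 * p i / (p i + q i))) ≤ (4/27) * (∑ i, (p i - q i) * Real.log (p i / q i)) := by
  constructor
  · have h1 : ∑ i, (p i - q i)/2 ≤ ∑ i, p i * Real.log (2 * p i / (p i + q i)) :=
      Finset.sum_le_sum (fun i _ => key_lower (hp i) (hq i))
    have h2 : ∑ i, (p i - q i)/2 = 0 := by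
      rw [← Finset.sum_div, Finset.sum_sub_distrib, hp1, hq1]
      norm_num
    linarith
  · have h1 : ∑ i, p i * Real.log (2 * p i / (p i + q i))
        ≤ ∑ i, ((p i - q i)/2 + 4/27*((p i - q i)*(Real.log (p i) - Real.log (q i)))) := by
      apply Finset.sum_le_sum
      intro i _
      exact key_upper (hp i) (hq i)
    have h2 : ∑ i, ((p i - q i)/2 + 4/27*((p i - q i)*(Real.log (p i) - Real.log (q i))))
        = (4/27) * (∑ i, (p i - q i) * Real.log (p i / q i)) := by
      rw [Finset.sum_add_distrib, ← Finset.sum_div, Finset.sum_sub_distrib, hp1, hq1, ← Finset.mul_sum]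
      norm_num
      apply Finset.sum_congr rfl
      intro i _
      rw [Real.log_div (hp i).ne' (hq i).ne']
    linarith
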